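/- The five-node rule with nodes {−√15/5, −√15/10, 0, √15/10, √15/5}·δ (relative to center 0, with δ = 1) and weights {w₁², 2w₁w₂, 2w₁w₃+w₂², 2w₂w₃, w₃²}, where (w₁,w₂,w₃)=(5/18,4/9,5/18), exactly computes the double average (1/δ²)∫_{−δ/2}^{δ/2}∫_{x−δ/2}^{x+δ/2} p(ξ) dξ dx for all polynomials p of degree ≤ 4, with δ = 1. -/

import Mathlib

open Real intervalIntegral

lemma int_poly4 (a b c0 c1 c2 c3 c4 : ℝ) :
    ∫ x in a..b, (c0 + c1 * x + c2 * x ^ 2 + c3 * x ^ 3 + c4 * x ^ 4) =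
      c0 * (b - a) + c1 * (b ^ 2 - a ^ 2) / 2 + c2 * (b ^ 3 - a ^ 3) / 3 +
        c3 * (b ^ 4 - a ^ 4) / 4 + c4 * (b ^ 5 - a ^ 5) / 5 := by
  have hderiv : ∀ x ∈ Set.uIcc a b,
      HasDerivAt (fun x : ℝ => c0 * x ^ 1 + c1 * x ^ 2 / 2 + c2 * x ^ 3 / 3 +
        c3 * x ^ 4 / 4 + c4 * x ^ 5 / 5)
        (c0 + c1 * x + c2 * x ^ 2 + c3 * x ^ 3 + c4 * x ^ 4) x := by
    intro x _
    have h := (((((hasDerivAt_pow 1 x).const_mul c0).add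
        (((hasDerivAt_pow 2 x).const_mul c1).div_const 2)).add
        (((hasDerivAt_pow 3 x).const_mul c2).div_const 3)).add
        (((hasDerivAt_pow 4 x).const_mul c3).div_const 4)).add
        (((hasDerivAt_pow 5 x).const_mul c4).div_const 5)
    refine h.congr_deriv ?_
    push_cast
    ring
  rw [intervalIntegral.integral_eq_sub_of_hasDerivAt hderiv
    (Continuous.intervalIntegrable (by continuity) a b)]
  ring

theorem five_node_double_average_exact (p : Polynomial ℝ) (hp : p.degree ≤ 4) :
    let w₁ : ℝ := 5 / 18
    let w₂ : ℝ := 4 / 9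
    let w₃ : ℝ := 5 / 18
    w₁ ^ 2 * p.eval (-(Real.sqrt 15 / 5)) + 2 * w₁ * w₂ * p.eval (-(Real.sqrt 15 / 10)) +
      (2 * w₁ * w₃ + w₂ ^ 2) * p.eval 0 + 2 * w₂ * w₃ * p.eval (Real.sqrt 15 / 10) +
      w₃ ^ 2 * p.eval (Real.sqrt 15 / 5) =
    ∫ x in (-(1 / 2) : ℝ)..(1 / 2), ∫ ξ in (x - 1 / 2)..(x + 1 / 2), p.eval ξ := by
  intro w₁ w₂ w₃
  set c0 := p.coeff 0
  set c1 := p.coeff 1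
  set c2 := p.coeff 2
  set c3 := p.coeff 3
  set c4 := p.coeff 4
  have hnd : p.natDegree < 5 :=
    lt_of_le_of_lt (Polynomial.natDegree_le_iff_degree_le.mpr hp) (by norm_num)
  have heval : ∀ x : ℝ, p.eval x = c0 + c1 * x + c2 * x ^ 2 + c3 * x ^ 3 + c4 * x ^ 4 := by
    intro x
    rw [Polynomial.eval_eq_sum_range' hnd]
    simp [Finset.sum_range_succ]
    rfl
  have hinner : ∀ x : ℝ, (∫ ξ in (x - 1 / 2)..(x + 1 / 2), p.eval ξ) =
      (c0 + c2 / 12 + c4 / 80) + (c1 + c3 / 4) * x + (c2 + c4 / 2) * x ^ 2 +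
        c3 * x ^ 3 + c4 * x ^ 4 := by
    intro x
    have : (∫ ξ in (x - 1 / 2)..(x + 1 / 2), p.eval ξ) =
        ∫ ξ in (x - 1 / 2)..(x + 1 / 2), (c0 + c1 * ξ + c2 * ξ ^ 2 + c3 * ξ ^ 3 + c4 * ξ ^ 4) :=
      intervalIntegral.integral_congr (fun ξ _ => heval ξ)
    rw [this, int_poly4]
    ring
  have houter : (∫ x in (-(1 / 2) : ℝ)..(1 / 2), ∫ ξ in (x - 1 / 2)..(x + 1 / 2), p.eval ξ) =
      c0 + c2 / 6 + c4 / 15 := by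
    have : (∫ x in (-(1 / 2) : ℝ)..(1 / 2), ∫ ξ in (x - 1 / 2)..(x + 1 / 2), p.eval ξ) =
        ∫ x in (-(1 / 2) : ℝ)..(1 / 2),
          ((c0 + c2 / 12 + c4 / 80) + (c1 + c3 / 4) * x + (c2 + c4 / 2) * x ^ 2 +
            c3 * x ^ 3 + c4 * x ^ 4) :=
      intervalIntegral.integral_congr (fun x _ => hinner x)
    rw [this, int_poly4]
    ring
  rw [houter, heval, heval, heval, heval, heval]
  have hs : Real.sqrt 15 ^ 2 = 15 := Real.sq_sqrt (by norm_num)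
  simp only [w₁, w₂, w₃]
  linear_combination (c2 / 90 + c4 * (Real.sqrt 15 ^ 2 + 15) / 3375) * hs
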